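/- Let φ ∈ Σ_r ⊗ Δ_n be a partially pure spinor. Then there is a unique map J^φ : V^φ → V^φ satisfying X·φ = i J^φ(X)·φ for all X ∈ V^φ; it is ℝ-linear and satisfies (J^φ)² = −Id_{V^φ} and ⟨J^φ(X), J^φ(Y)⟩ = ⟨X, Y⟩ for all X, Y ∈ V^φ (i.e. J^φ is an orthogonal complex structure on V^φ); consequently n − r = dim V^φ is even. -/

import Mathlib

open Complex Matrix
noncomputable section
abbrev Rn (n : ℕ) := EuclideanSpace ℝ (Fin n)
abbrev SpIdx (n : ℕ) : Type := Fin (n / 2) → Fin 2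
abbrev Spinor (n : ℕ) := EuclideanSpace ℂ (SpIdx n)
abbrev TwSpinor (r n : ℕ) := EuclideanSpace ℂ (SpIdx r × SpIdx n)

def g1M : Matrix (Fin 2) (Fin 2) ℂ := !![I, 0; 0, -I]
def g2M : Matrix (Fin 2) (Fin 2) ℂ := !![0, I; I, 0]
def TM : Matrix (Fin 2) (Fin 2) ℂ := !![0, -I; I, 0]

def tensorOp {k : ℕ} (M : Fin k → Matrix (Fin 2) (Fin 2) ℂ) :
    Matrix (Fin k → Fin 2) (Fin k → Fin 2) ℂ :=
  Matrix.of fun x y => ∏ t, M t (x t) (y t)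

def genMat (n : ℕ) (i : ℕ) : Matrix (SpIdx n) (SpIdx n) ℂ :=
  if i < 2 * (n / 2) then
    tensorOp (fun t =>
      if (t : ℕ) < n / 2 - 1 - i / 2 then 1
      else if (t : ℕ) = n / 2 - 1 - i / 2 then (if i % 2 = 0 then g1M else g2M)
      else TM)
  else I • tensorOp (fun _ => TM)

def vecMat (n : ℕ) (X : Rn n) : Matrix (SpIdx n) (SpIdx n) ℂ :=
  ∑ i : Fin n, (X i : ℂ) • genMat n (i : ℕ)

def volMat (n : ℕ) : Matrix (SpIdx n) (SpIdx n) ℂ :=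
  ((List.range n).map (genMat n)).prod

def actN {r n : ℕ} (M : Matrix (SpIdx n) (SpIdx n) ℂ) (φ : TwSpinor r n) : TwSpinor r n :=
  WithLp.toLp 2 (fun p : SpIdx r × SpIdx n => ∑ b, M p.2 b * φ (p.1, b))

def actR {r n : ℕ} (M : Matrix (SpIdx r) (SpIdx r) ℂ) (φ : TwSpinor r n) : TwSpinor r n :=
  WithLp.toLp 2 (fun p : SpIdx r × SpIdx n => ∑ a, M p.1 a * φ (a, p.2))

def wedgeMat (n : ℕ) (X Y : Rn n) : Matrix (SpIdx n) (SpIdx n) ℂ :=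
  vecMat n X * vecMat n Y + (((inner ℝ X Y : ℝ) : ℂ)) • 1

def etaM (r n : ℕ) (M : Matrix (SpIdx r) (SpIdx r) ℂ) (φ : TwSpinor r n) (X Y : Rn n) : ℝ :=
  ((inner ℂ (actN (wedgeMat n X Y) (actR M φ)) φ : ℂ)).re

def eta (r n : ℕ) (φ : TwSpinor r n) (k l : ℕ) (X Y : Rn n) : ℝ :=
  etaM r n (genMat r k * genMat r l) φ X Y

def stdBasis (n : ℕ) (i : Fin n) : Rn n := EuclideanSpace.single i 1

def etaActionM (r n : ℕ) (M : Matrix (SpIdx r) (SpIdx r) ℂ) (φ : TwSpinor r n) : TwSpinor r n :=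
  ∑ i : Fin n, ∑ j : Fin n,
    if i < j then
      ((etaM r n M φ (stdBasis n i) (stdBasis n j) : ℝ) : ℂ) • actN (genMat n (i:ℕ) * genMat n (j:ℕ)) φ
    else 0

def InSigma (r n : ℕ) (φ : TwSpinor r n) : Prop :=
  r % 2 = 1 ∨ actR (((-I) ^ (r / 2)) • volMat r) φ = φ

structure IsPartiallyPure (r n : ℕ) (φ : TwSpinor r n) (V : Submodule ℝ (Rn n)) : Prop where
  lt_dim : r < n
  mem_sigma : InSigma r n φ
  unit_norm : ‖φ‖ = 1
  dim_eq : Module.finrank ℝ V = n - r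
  exists_conj : ∀ X ∈ V, ∃ Y ∈ V, actN (vecMat n X) φ = I • actN (vecMat n Y) φ
  eta_plus : ∀ k l : Fin r, k < l →
    etaActionM r n (genMat r (k : ℕ) * genMat r (l : ℕ)) φ
      + actR (genMat r (k : ℕ) * genMat r (l : ℕ)) φ = 0
  f_orth : ∀ k l : Fin r, k < l →
    (inner ℂ (actR (genMat r (k : ℕ) * genMat r (l : ℕ)) φ) φ : ℂ) = 0
  vol_orth : r = 4 → (inner ℂ (actR (volMat r) φ) φ : ℂ) = 0
-- real matrix applied to a Euclidean vector
def mvE {n : ℕ} (M : Matrix (Fin n) (Fin n) ℝ) (x : Rn n) : Rn n := WithLp.toLp 2 (fun i => ∑ j, M i j * x j)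

def etaHatMat (r n : ℕ) (φ : TwSpinor r n) (k l : ℕ) : Matrix (Fin n) (Fin n) ℝ :=
  Matrix.of fun i j => eta r n φ k l (stdBasis n j) (stdBasis n i)

def etaHatExt (r n : ℕ) (φ : TwSpinor r n) (k l : Fin r) : Matrix (Fin n) (Fin n) ℝ :=
  if k = l then 0 else if k < l then etaHatMat r n φ (k : ℕ) (l : ℕ)
  else -(etaHatMat r n φ (l : ℕ) (k : ℕ))

def etaPhi (r n : ℕ) (φ : TwSpinor r n) (C : Matrix (Fin r) (Fin r) ℝ) :
    Matrix (Fin n) (Fin n) ℝ :=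
  ∑ k : Fin r, ∑ l : Fin r, if k < l then C k l • etaHatMat r n φ (k : ℕ) (l : ℕ) else 0

def IsEtaFrame (r n : ℕ) (φ : TwSpinor r n) (V : Submodule ℝ (Rn n)) (v : Fin r → Rn n) : Prop :=
  Orthonormal ℝ v ∧ (∀ k, v k ∈ Vᗮ) ∧
    ∀ k l : Fin r, k < l → ∀ X Y : Rn n,
      eta r n φ (k : ℕ) (l : ℕ) X Y
        = (inner ℝ (v k) X : ℝ) * (inner ℝ (v l) Y : ℝ) - (inner ℝ (v l) X : ℝ) * (inner ℝ (v k) Y : ℝ)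

def IsJ (r n : ℕ) (φ : TwSpinor r n) (V : Submodule ℝ (Rn n)) (J : Rn n → Rn n) : Prop :=
  (∀ X ∈ V, J X ∈ V) ∧ ∀ X ∈ V, actN (vecMat n X) φ = I • actN (vecMat n (J X)) φ

def Fop (r n : ℕ) (φ : TwSpinor r n) : TwSpinor r n :=
  ((-I) ^ (n / 2) * I ^ (r / 2)) • actN (volMat n) (actR (volMat r) φ)

def tripleFrame (m r : ℕ) (v vJ : Fin m → Rn (2*m+r)) (w : Fin r → Rn (2*m+r)) :
    Fin (2*m+r) → Rn (2*m+r) :=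
  fun i => if h : (i : ℕ) < 2*m then
      (if (i : ℕ) % 2 = 0 then v ⟨(i:ℕ)/2, by omega⟩ else vJ ⟨(i:ℕ)/2, by omega⟩)
    else w ⟨(i:ℕ) - 2*m, by have := i.isLt; omega⟩

def frameDet (n : ℕ) (u : Fin n → Rn n) : ℝ := (Matrix.of fun i j => u i j).det

def TripleSign (m r : ℕ) (φ : TwSpinor r (2*m+r)) (V : Submodule ℝ (Rn (2*m+r)))
    (J : Rn (2*m+r) → Rn (2*m+r)) (c : ℝ) : Prop :=
  ∃ (v : Fin m → Rn (2*m+r)) (w : Fin r → Rn (2*m+r)),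
    (∀ j, v j ∈ V) ∧ IsEtaFrame r (2*m+r) φ V w ∧
    Orthonormal ℝ (tripleFrame m r v (fun j => J (v j)) w) ∧
    frameDet (2*m+r) (tripleFrame m r v (fun j => J (v j)) w) = c

def IsCompatTriple (m r : ℕ) (V : Submodule ℝ (Rn (2*m+r)))
    (J : Rn (2*m+r) → Rn (2*m+r)) (w : Fin r → Rn (2*m+r)) : Prop :=
  Module.finrank ℝ V = 2*m ∧ (∀ x ∈ V, J x ∈ V) ∧ (∀ x ∈ V, J (J x) = -x) ∧
  (∀ x ∈ V, ∀ y ∈ V, (inner ℝ (J x) (J y) : ℝ) = (inner ℝ x y : ℝ)) ∧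
  Orthonormal ℝ w ∧ (∀ k, w k ∈ Vᗮ)

def IsPosTriple (m r : ℕ) (V : Submodule ℝ (Rn (2*m+r)))
    (J : Rn (2*m+r) → Rn (2*m+r)) (w : Fin r → Rn (2*m+r)) : Prop :=
  IsCompatTriple m r V J w ∧ ∃ v : Fin m → Rn (2*m+r), (∀ j, v j ∈ V) ∧
    Orthonormal ℝ (tripleFrame m r v (fun j => J (v j)) w) ∧
    frameDet (2*m+r) (tripleFrame m r v (fun j => J (v j)) w) = 1

def SpinMat (n : ℕ) : Set (Matrix (SpIdx n) (SpIdx n) ℂ) :=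
  {M | ∃ L : List (Rn n), L.length % 2 = 0 ∧ (∀ x ∈ L, ‖x‖ = 1) ∧
        M = (L.map (vecMat n)).prod}

def kronOp {r n : ℕ} (h : Matrix (SpIdx r) (SpIdx r) ℂ) (g : Matrix (SpIdx n) (SpIdx n) ℂ) :
    Matrix (SpIdx r × SpIdx n) (SpIdx r × SpIdx n) ℂ :=
  Matrix.of fun p q => h p.1 q.1 * g p.2 q.2

def SpinCR (r n : ℕ) : Set (Matrix (SpIdx r × SpIdx n) (SpIdx r × SpIdx n) ℂ) :=
  {U | ∃ g ∈ SpinMat n, ∃ h ∈ SpinMat r, ∃ z : ℂ, ‖z‖ = 1 ∧ U = z • kronOp h g}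

def SpinCsub (r n : ℕ) : Set (Matrix (SpIdx r × SpIdx n) (SpIdx r × SpIdx n) ℂ) :=
  {U | ∃ h ∈ SpinMat r, ∃ z : ℂ, ‖z‖ = 1 ∧ U = z • kronOp h 1}

def twAct {r n : ℕ} (U : Matrix (SpIdx r × SpIdx n) (SpIdx r × SpIdx n) ℂ)
    (φ : TwSpinor r n) : TwSpinor r n :=
  WithLp.toLp 2 (fun p => ∑ q, U p q * φ q)

def SOset (r : ℕ) : Set (Matrix (Fin r) (Fin r) ℝ) := {B | B * Bᵀ = 1 ∧ B.det = 1}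

def SOg (r : ℕ) : Subgroup (Matrix.orthogonalGroup (Fin r) ℝ) :=
  MonoidHom.ker (Matrix.detMonoidHom.comp (Matrix.orthogonalGroup (Fin r) ℝ).subtype)

def soMat {r : ℕ} (B : ↥(SOg r)) : Matrix (Fin r) (Fin r) ℝ := ((B : Matrix.orthogonalGroup (Fin r) ℝ) : Matrix (Fin r) (Fin r) ℝ)

def toCvec (m r : ℕ) (x : Rn (2*m+r)) : Fin m → ℂ :=
  fun j => (x ⟨2*(j:ℕ), by have := j.isLt; omega⟩ : ℝ) + (x ⟨2*(j:ℕ)+1, by have := j.isLt; omega⟩ : ℝ) * I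

def blockMap (m r : ℕ) (A : Matrix (Fin m) (Fin m) ℂ) (B : Matrix (Fin r) (Fin r) ℝ) :
    Rn (2*m+r) → Rn (2*m+r) :=
  fun x => WithLp.toLp 2 (fun i : Fin (2*m+r) =>
    if h : (i : ℕ) < 2*m then
      (if (i : ℕ) % 2 = 0 then (A.mulVec (toCvec m r x) ⟨(i:ℕ)/2, by omega⟩).re
       else (A.mulVec (toCvec m r x) ⟨(i:ℕ)/2, by omega⟩).im)
    else ∑ k : Fin r, B ⟨(i:ℕ) - 2*m, by have := i.isLt; omega⟩ k
            * x ⟨2*m + (k:ℕ), by have := k.isLt; omega⟩)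

lemma tensorOp_mul {k : ℕ} (M N : Fin k → Matrix (Fin 2) (Fin 2) ℂ) :
    tensorOp M * tensorOp N = tensorOp (fun t => M t * N t) := by
  ext x y
  simp only [tensorOp, Matrix.mul_apply, Matrix.of_apply, Fintype.prod_sum,
    ← Finset.prod_mul_distrib]

lemma tensorOp_one {k : ℕ} : tensorOp (fun _ : Fin k => (1 : Matrix (Fin 2) (Fin 2) ℂ)) = 1 := by
  ext x y
  simp only [tensorOp, Matrix.of_apply, Matrix.one_apply]
  by_cases h : x = y
  · simp [h]
  · obtain ⟨t, ht⟩ := Function.ne_iff.mp h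
    rw [if_neg h]
    exact Finset.prod_eq_zero (Finset.mem_univ t) (by simp [ht])

lemma tensorOp_smul {k : ℕ} (s : Fin k → ℂ) (M : Fin k → Matrix (Fin 2) (Fin 2) ℂ) :
    tensorOp (fun t => s t • M t) = (∏ t, s t) • tensorOp M := by
  ext x y
  simp [tensorOp, Finset.prod_mul_distrib]

lemma tensorOp_conjT {k : ℕ} (M : Fin k → Matrix (Fin 2) (Fin 2) ℂ) :
    (tensorOp M)ᴴ = tensorOp (fun t => (M t)ᴴ) := by
  ext x y
  simp [tensorOp, Matrix.conjTranspose_apply, map_prod]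

-- 2x2 facts

lemma g1_sq : g1M * g1M = -1 := by
  ext i j; fin_cases i <;> fin_cases j <;>
    simp [g1M, Matrix.mul_apply, Fin.sum_univ_two]

lemma g2_sq : g2M * g2M = -1 := by
  ext i j; fin_cases i <;> fin_cases j <;>
    simp [g2M, Matrix.mul_apply, Fin.sum_univ_two]

lemma T_sq : TM * TM = 1 := by
  ext i j; fin_cases i <;> fin_cases j <;>
    simp [TM, Matrix.mul_apply, Fin.sum_univ_two]

lemma g1_conjT : g1Mᴴ = -g1M := by
  ext i j; fin_cases i <;> fin_cases j <;>
    simp [g1M, Matrix.conjTranspose_apply]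

lemma g2_conjT : g2Mᴴ = -g2M := by
  ext i j; fin_cases i <;> fin_cases j <;>
    simp [g2M, Matrix.conjTranspose_apply]

lemma T_conjT : TMᴴ = TM := by
  ext i j; fin_cases i <;> fin_cases j <;>
    simp [TM, Matrix.conjTranspose_apply]

lemma g1_g2 : g1M * g2M = -(g2M * g1M) := by
  ext i j; fin_cases i <;> fin_cases j <;>
    simp [g1M, g2M, Matrix.mul_apply, Fin.sum_univ_two]

lemma g1_T : g1M * TM = -(TM * g1M) := by
  ext i j; fin_cases i <;> fin_cases j <;>
    simp [g1M, TM, Matrix.mul_apply, Fin.sum_univ_two]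

lemma g2_T : g2M * TM = -(TM * g2M) := by
  ext i j; fin_cases i <;> fin_cases j <;>
    simp [g2M, TM, Matrix.mul_apply, Fin.sum_univ_two]

-- the generator family

def fam (n i : ℕ) : Fin (n / 2) → Matrix (Fin 2) (Fin 2) ℂ := fun t =>
  if (t : ℕ) < n / 2 - 1 - i / 2 then 1
  else if (t : ℕ) = n / 2 - 1 - i / 2 then (if i % 2 = 0 then g1M else g2M)
  else TM

-- sign product: product of (if t = P then -1 else 1) over Fin (n/2) equals -1, if P < n/2

lemma sign_prod {k : ℕ} (P : ℕ) (hP : P < k) :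
    (∏ t : Fin k, (if (t : ℕ) = P then (-1 : ℂ) else 1)) = -1 := by
  have : ∀ t : Fin k, ((t : ℕ) = P ↔ t = ⟨P, hP⟩) := by
    intro t; simp [Fin.ext_iff]
  simp only [this]
  rw [Finset.prod_ite_eq' Finset.univ (⟨P, hP⟩ : Fin k) (fun _ => (-1 : ℂ))]
  simp

lemma fam_sq (n i : ℕ) (hi : i < 2 * (n / 2)) :
    tensorOp (fam n i) * tensorOp (fam n i) = -1 := by
  have hP : n / 2 - 1 - i / 2 < n / 2 := by omega
  rw [tensorOp_mul]
  have h : (fun t => fam n i t * fam n i t)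
      = fun t : Fin (n / 2) =>
          (if (t : ℕ) = n / 2 - 1 - i / 2 then (-1 : ℂ) else 1) •
            (1 : Matrix (Fin 2) (Fin 2) ℂ) := by
    funext t
    by_cases h1 : (t : ℕ) < n / 2 - 1 - i / 2
    · have hne : ¬((t : ℕ) = n / 2 - 1 - i / 2) := by omega
      simp [fam, h1, hne]
    · by_cases h2 : (t : ℕ) = n / 2 - 1 - i / 2
      · by_cases h3 : i % 2 = 0 <;> simp [fam, h1, h2, h3, g1_sq, g2_sq]
      · simp [fam, h1, h2, T_sq]
  rw [h, tensorOp_smul, tensorOp_one, sign_prod _ hP]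
  simp

lemma fam_conjT (n i : ℕ) (hi : i < 2 * (n / 2)) :
    (tensorOp (fam n i))ᴴ = -(tensorOp (fam n i)) := by
  have hP : n / 2 - 1 - i / 2 < n / 2 := by omega
  rw [tensorOp_conjT]
  have h : (fun t => (fam n i t)ᴴ)
      = fun t : Fin (n / 2) =>
          (if (t : ℕ) = n / 2 - 1 - i / 2 then (-1 : ℂ) else 1) • fam n i t := by
    funext t
    by_cases h1 : (t : ℕ) < n / 2 - 1 - i / 2
    · have hne : ¬((t : ℕ) = n / 2 - 1 - i / 2) := by omega
      simp [fam, h1, hne]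
    · by_cases h2 : (t : ℕ) = n / 2 - 1 - i / 2
      · by_cases h3 : i % 2 = 0 <;> simp [fam, h1, h2, h3, g1_conjT, g2_conjT]
      · simp [fam, h1, h2, T_conjT]
  rw [h, tensorOp_smul, sign_prod _ hP]
  simp

lemma fam_anticomm (n i j : ℕ) (hi : i < 2 * (n / 2)) (hj : j < 2 * (n / 2)) (hij : i < j) :
    tensorOp (fam n i) * tensorOp (fam n j) = -(tensorOp (fam n j) * tensorOp (fam n i)) := by
  have hPi : n / 2 - 1 - i / 2 < n / 2 := by omega
  have hle : n / 2 - 1 - j / 2 ≤ n / 2 - 1 - i / 2 := by omega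
  rw [tensorOp_mul, tensorOp_mul]
  have h : (fun t => fam n i t * fam n j t)
      = fun t : Fin (n / 2) =>
          (if (t : ℕ) = n / 2 - 1 - i / 2 then (-1 : ℂ) else 1) •
            (fam n j t * fam n i t) := by
    funext t
    by_cases h1 : (t : ℕ) < n / 2 - 1 - j / 2
    · have h1' : (t : ℕ) < n / 2 - 1 - i / 2 := by omega
      have hne : ¬((t : ℕ) = n / 2 - 1 - i / 2) := by omega
      simp [fam, h1, h1', hne]
    · by_cases h2 : (t : ℕ) = n / 2 - 1 - j / 2
      · by_cases heq : n / 2 - 1 - j / 2 = n / 2 - 1 - i / 2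
        · have hi0 : i % 2 = 0 := by omega
          have hj1 : ¬(j % 2 = 0) := by omega
          have hlt : ¬(n / 2 - 1 - j / 2 < n / 2 - 1 - i / 2) := by omega
          simp [fam, h1, h2, heq, hlt, hi0, hj1, g1_g2]
        · have hlt : n / 2 - 1 - j / 2 < n / 2 - 1 - i / 2 := by omega
          by_cases hj0 : j % 2 = 0 <;> simp [fam, h1, h2, heq, hlt, hj0]
      · by_cases h3 : (t : ℕ) < n / 2 - 1 - i / 2
        · have hne : ¬((t : ℕ) = n / 2 - 1 - i / 2) := by omega
          simp [fam, h1, h2, h3, hne]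
        · by_cases h4 : (t : ℕ) = n / 2 - 1 - i / 2
          · have ha : ¬(n / 2 - 1 - i / 2 < n / 2 - 1 - j / 2) := by omega
            have hb : ¬(n / 2 - 1 - i / 2 = n / 2 - 1 - j / 2) := by omega
            by_cases h5 : i % 2 = 0 <;>
              simp [fam, h1, h2, h3, h4, h5, ha, hb, g1_T, g2_T]
          · simp [fam, h1, h2, h3, h4]
  rw [h, tensorOp_smul, sign_prod _ hPi]
  simp

lemma fam_T_anticomm (n i : ℕ) (hi : i < 2 * (n / 2)) :
    tensorOp (fam n i) * tensorOp (fun _ => TM)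
      = -(tensorOp (fun _ => TM) * tensorOp (fam n i)) := by
  have hP : n / 2 - 1 - i / 2 < n / 2 := by omega
  rw [tensorOp_mul, tensorOp_mul]
  have h : (fun t => fam n i t * TM)
      = fun t : Fin (n / 2) =>
          (if (t : ℕ) = n / 2 - 1 - i / 2 then (-1 : ℂ) else 1) • (TM * fam n i t) := by
    funext t
    by_cases h1 : (t : ℕ) < n / 2 - 1 - i / 2
    · have hne : ¬((t : ℕ) = n / 2 - 1 - i / 2) := by omega
      simp [fam, h1, hne]
    · by_cases h2 : (t : ℕ) = n / 2 - 1 - i / 2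
      · by_cases h3 : i % 2 = 0 <;> simp [fam, h1, h2, h3, g1_T, g2_T]
      · simp [fam, h1, h2]
  rw [h, tensorOp_smul, sign_prod _ hP]
  simp

lemma genMat_eq_fam (n i : ℕ) (hi : i < 2 * (n / 2)) : genMat n i = tensorOp (fam n i) := by
  rw [genMat, if_pos hi]; rfl

lemma genMat_eq_extra (n i : ℕ) (hi : ¬ i < 2 * (n / 2)) :
    genMat n i = I • tensorOp (fun _ => TM) := by
  rw [genMat, if_neg hi]

lemma TT_one {k : ℕ} : tensorOp (fun _ : Fin k => TM) * tensorOp (fun _ => TM) = 1 := by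
  rw [tensorOp_mul]
  have : (fun t : Fin k => TM * TM) = fun _ => (1 : Matrix (Fin 2) (Fin 2) ℂ) :=
    funext fun _ => T_sq
  rw [this, tensorOp_one]

lemma genMat_sq (n i : ℕ) (hi : i < n) : genMat n i * genMat n i = -1 := by
  by_cases h : i < 2 * (n / 2)
  · rw [genMat_eq_fam n i h]; exact fam_sq n i h
  · rw [genMat_eq_extra n i h]
    rw [Matrix.smul_mul, Matrix.mul_smul, smul_smul, I_mul_I, TT_one]
    simp

lemma genMat_conjT (n i : ℕ) (hi : i < n) : (genMat n i)ᴴ = -genMat n i := by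
  by_cases h : i < 2 * (n / 2)
  · rw [genMat_eq_fam n i h]; exact fam_conjT n i h
  · rw [genMat_eq_extra n i h, Matrix.conjTranspose_smul, tensorOp_conjT]
    have : (fun t : Fin (n / 2) => TMᴴ) = fun _ => TM := funext fun _ => T_conjT
    rw [this]
    simp

lemma genMat_anticomm (n i j : ℕ) (hi : i < n) (hj : j < n) (hij : i ≠ j) :
    genMat n i * genMat n j = -(genMat n j * genMat n i) := by
  by_cases h1 : i < 2 * (n / 2) <;> by_cases h2 : j < 2 * (n / 2)
  · rw [genMat_eq_fam n i h1, genMat_eq_fam n j h2]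
    rcases lt_or_gt_of_ne hij with h | h
    · exact fam_anticomm n i j h1 h2 h
    · rw [fam_anticomm n j i h2 h1 h]; simp
  · rw [genMat_eq_fam n i h1, genMat_eq_extra n j h2]
    rw [Matrix.mul_smul, Matrix.smul_mul, fam_T_anticomm n i h1]
    simp
  · rw [genMat_eq_extra n i h1, genMat_eq_fam n j h2]
    rw [Matrix.mul_smul, Matrix.smul_mul, fam_T_anticomm n j h2]
    simp
  · exact (hij (by omega)).elim

lemma vecMat_add (n : ℕ) (X Y : Rn n) : vecMat n (X + Y) = vecMat n X + vecMat n Y := by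
  simp [vecMat, add_smul, Finset.sum_add_distrib]

lemma vecMat_sub (n : ℕ) (X Y : Rn n) : vecMat n (X - Y) = vecMat n X - vecMat n Y := by
  simp [vecMat, sub_smul, Finset.sum_sub_distrib]

lemma vecMat_smul (n : ℕ) (a : ℝ) (X : Rn n) : vecMat n (a • X) = (a : ℂ) • vecMat n X := by
  simp [vecMat, smul_smul, Finset.smul_sum]
  norm_cast

lemma vecMat_neg (n : ℕ) (X : Rn n) : vecMat n (-X) = -vecMat n X := by
  simp [vecMat, Finset.sum_neg_distrib]

lemma vecMat_conjT (n : ℕ) (X : Rn n) : (vecMat n X)ᴴ = -vecMat n X := by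
  unfold vecMat
  rw [Matrix.conjTranspose_sum]
  rw [← Finset.sum_neg_distrib]
  refine Finset.sum_congr rfl fun i _ => ?_
  rw [Matrix.conjTranspose_smul, genMat_conjT n i i.isLt]
  simp [Complex.conj_ofReal]

lemma vecMat_sq (n : ℕ) (X : Rn n) :
    vecMat n X * vecMat n X = -(((inner ℝ X X : ℝ) : ℂ)) • 1 := by
  unfold vecMat
  rw [Finset.sum_mul_sum]
  have key : ∀ i j : Fin n, ((X i : ℂ) • genMat n i) * ((X j : ℂ) • genMat n j)
      = ((X i : ℂ) * (X j : ℂ)) • (genMat n i * genMat n j) := by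
    intro i j
    rw [Matrix.smul_mul, Matrix.mul_smul, smul_smul]
  simp_rw [key]
  rw [← Fintype.sum_prod_type']
  rw [← Finset.sum_filter_add_sum_filter_not Finset.univ (fun p : Fin n × Fin n => p.1 = p.2)]
  have hoff : ∑ p ∈ Finset.univ.filter (fun p : Fin n × Fin n => ¬ p.1 = p.2),
      ((X p.1 : ℂ) * (X p.2 : ℂ)) • (genMat n p.1 * genMat n p.2) = 0 := by
    apply Finset.sum_involution (fun p _ => Prod.swap p)
    · intro p hp
      simp only [Finset.mem_filter] at hp
      have : genMat n (p.1 : ℕ) * genMat n (p.2 : ℕ)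
          = -(genMat n (p.2 : ℕ) * genMat n (p.1 : ℕ)) :=
        genMat_anticomm n _ _ p.1.isLt p.2.isLt (by simpa [Fin.val_eq_val] using hp.2)
      simp [Prod.swap, this, mul_comm]
    · intro p hp _
      simp only [Finset.mem_filter] at hp
      simp [Prod.ext_iff, Prod.swap]
      intro h; exact (hp.2 h.symm).elim
    · intro p hp
      simp only [Finset.mem_filter, Finset.mem_univ, true_and] at hp ⊢
      simp [Prod.swap]; exact fun h => hp h.symm
    · intro p hp; simp [Prod.swap]
  rw [hoff, add_zero]
  have hdiag : ∑ p ∈ Finset.univ.filter (fun p : Fin n × Fin n => p.1 = p.2),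
      ((X p.1 : ℂ) * (X p.2 : ℂ)) • (genMat n p.1 * genMat n p.2)
      = ∑ i : Fin n, ((X i : ℂ) * (X i : ℂ)) • (genMat n i * genMat n i) := by
    apply Finset.sum_nbij' (fun p => p.1) (fun i => (i, i)) <;>
      simp +contextual [Prod.ext_iff]
  rw [hdiag]
  have : ∀ i : Fin n, ((X i : ℂ) * (X i : ℂ)) • (genMat n i * genMat n i)
      = -(((X i * X i : ℝ) : ℂ) • (1 : Matrix (SpIdx n) (SpIdx n) ℂ)) := by
    intro i
    rw [genMat_sq n i i.isLt]
    push_cast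
    simp
  simp_rw [this]
  rw [Finset.sum_neg_distrib, ← Finset.sum_smul]
  congr 1
  rw [PiLp.inner_apply]
  push_cast
  simp [RCLike.inner_apply, sq]

lemma vecMat_anti (n : ℕ) (X Y : Rn n) :
    vecMat n X * vecMat n Y + vecMat n Y * vecMat n X
      = -(((2 * (inner ℝ X Y : ℝ) : ℝ) : ℂ)) • 1 := by
  have h2 : vecMat n X * vecMat n Y + vecMat n Y * vecMat n X
      = (vecMat n (X + Y) * vecMat n (X + Y)) - vecMat n X * vecMat n X
          - vecMat n Y * vecMat n Y := by
    rw [vecMat_add, add_mul, mul_add, mul_add]; abel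
  rw [h2, vecMat_sq, vecMat_sq, vecMat_sq, real_inner_add_add_self]
  push_cast
  module

lemma actN_mul {r n : ℕ} (M N : Matrix (SpIdx n) (SpIdx n) ℂ) (φ : TwSpinor r n) :
    actN (M * N) φ = actN M (actN N φ) := by
  ext p
  simp only [actN, Matrix.mul_apply, Finset.sum_mul, Finset.mul_sum, mul_assoc]
  exact Finset.sum_comm

lemma actN_one {r n : ℕ} (φ : TwSpinor r n) : actN (1 : Matrix (SpIdx n) (SpIdx n) ℂ) φ = φ := by
  ext p
  simp [actN, Matrix.one_apply]

lemma actN_smulM {r n : ℕ} (c : ℂ) (M : Matrix (SpIdx n) (SpIdx n) ℂ) (φ : TwSpinor r n) :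
    actN (c • M) φ = c • actN M φ := by
  ext p
  simp [actN, Finset.mul_sum, mul_assoc]

lemma actN_addM {r n : ℕ} (M N : Matrix (SpIdx n) (SpIdx n) ℂ) (φ : TwSpinor r n) :
    actN (M + N) φ = actN M φ + actN N φ := by
  ext p
  simp [actN, add_mul, Finset.sum_add_distrib]

lemma actN_negM {r n : ℕ} (M : Matrix (SpIdx n) (SpIdx n) ℂ) (φ : TwSpinor r n) :
    actN (-M) φ = -actN M φ := by
  ext p
  simp [actN, Finset.sum_neg_distrib]

lemma actN_subM {r n : ℕ} (M N : Matrix (SpIdx n) (SpIdx n) ℂ) (φ : TwSpinor r n) :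
    actN (M - N) φ = actN M φ - actN N φ := by
  rw [sub_eq_add_neg, actN_addM, actN_negM, sub_eq_add_neg]

lemma inner_actN {r n : ℕ} (M : Matrix (SpIdx n) (SpIdx n) ℂ) (φ ψ : TwSpinor r n) :
    (inner ℂ (actN M φ) ψ : ℂ) = inner ℂ φ (actN Mᴴ ψ) := by
  simp only [PiLp.inner_apply, RCLike.inner_apply, actN, Matrix.conjTranspose_apply,
    map_sum, _root_.map_mul, Finset.sum_mul, Finset.mul_sum]
  rw [Fintype.sum_prod_type, Fintype.sum_prod_type]
  refine Finset.sum_congr rfl fun p1 _ => ?_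
  rw [Finset.sum_comm]
  refine Finset.sum_congr rfl fun b _ => Finset.sum_congr rfl fun c _ => ?_
  simp only [RingHom.coe_coe, starRingEnd_apply]
  ring

lemma inner_act_vec {r n : ℕ} (X Y : Rn n) (φ : TwSpinor r n) :
    (inner ℂ (actN (vecMat n X) φ) (actN (vecMat n Y) φ) : ℂ)
      = -(inner ℂ φ (actN (vecMat n X * vecMat n Y) φ) : ℂ) := by
  rw [inner_actN, vecMat_conjT, actN_negM, inner_neg_right, actN_mul]

lemma inner_act_vec_self {r n : ℕ} (X : Rn n) (φ : TwSpinor r n) :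
    (inner ℂ (actN (vecMat n X) φ) (actN (vecMat n X) φ) : ℂ)
      = ((inner ℝ X X : ℝ) : ℂ) * (inner ℂ φ φ : ℂ) := by
  rw [inner_act_vec, vecMat_sq, actN_smulM, actN_one, inner_smul_right]
  simp

lemma act_vec_eq_zero {r n : ℕ} (X : Rn n) (φ : TwSpinor r n) (hφ : ‖φ‖ = 1)
    (h : actN (vecMat n X) φ = 0) : X = 0 := by
  have h1 := inner_act_vec_self X φ
  rw [h, inner_zero_left] at h1
  have hp : (inner ℂ φ φ : ℂ) = 1 := by
    rw [inner_self_eq_norm_sq_to_K, hφ]; norm_num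
  rw [hp, mul_one] at h1
  have : (inner ℝ X X : ℝ) = 0 := by exact_mod_cast h1.symm
  exact inner_self_eq_zero.mp this

lemma act_vec_inj {r n : ℕ} (X Y : Rn n) (φ : TwSpinor r n) (hφ : ‖φ‖ = 1)
    (h : actN (vecMat n X) φ = actN (vecMat n Y) φ) : X = Y := by
  have : actN (vecMat n (X - Y)) φ = 0 := by
    rw [vecMat_sub, actN_subM, h, sub_self]
  exact sub_eq_zero.mp (act_vec_eq_zero _ φ hφ this)

lemma re_inner_act_vec {r n : ℕ} (X Y : Rn n) (φ : TwSpinor r n) (hφ : ‖φ‖ = 1) :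
    ((inner ℂ (actN (vecMat n X) φ) (actN (vecMat n Y) φ) : ℂ)).re = (inner ℝ X Y : ℝ) := by
  set A := (inner ℂ (actN (vecMat n X) φ) (actN (vecMat n Y) φ) : ℂ) with hA
  have hp : (inner ℂ φ φ : ℂ) = 1 := by
    rw [inner_self_eq_norm_sq_to_K, hφ]; norm_num
  have h1 : A + (starRingEnd ℂ) A = ((2 * (inner ℝ X Y : ℝ) : ℝ) : ℂ) := by
    rw [hA, inner_conj_symm, inner_act_vec, inner_act_vec, ← neg_add, ← inner_add_right,
      ← actN_addM, vecMat_anti, actN_smulM, actN_one, inner_smul_right, hp]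
    simp
  rw [Complex.add_conj] at h1
  have := Complex.ofReal_inj.mp h1
  linarith

/-- the unique map J^φ is an orthogonal complex structure on V^φ,
and n - r is even. -/
theorem stmt7 (n r : ℕ) (φ : TwSpinor r n) (V : Submodule ℝ (Rn n))
    (hpp : IsPartiallyPure r n φ V) :
    (∃! J : V → V, ∀ X : V,
        actN (vecMat n (X : Rn n)) φ = I • actN (vecMat n ((J X : Rn n))) φ) ∧
    (∀ J : V → V,
      (∀ X : V, actN (vecMat n (X : Rn n)) φ = I • actN (vecMat n ((J X : Rn n))) φ) →
      (∀ (a : ℝ) (X Y : V), J (a • X + Y) = a • J X + J Y) ∧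
      (∀ X : V, J (J X) = -X) ∧
      (∀ X Y : V, (inner ℝ ((J X : Rn n)) ((J Y : Rn n)) : ℝ) = (inner ℝ (X : Rn n) (Y : Rn n) : ℝ))) ∧
    (n - r) % 2 = 0 := by
  have hnorm := hpp.unit_norm
  -- construct J0 via choice
  have hJ0 : ∀ X : V, ∃ Y : V,
      actN (vecMat n (X : Rn n)) φ = I • actN (vecMat n (Y : Rn n)) φ := by
    intro X
    obtain ⟨Y, hY, h⟩ := hpp.exists_conj X X.2
    exact ⟨⟨Y, hY⟩, h⟩
  choose J0 hJ0spec using hJ0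
  have hinj : ∀ Y1 Y2 : V,
      actN (vecMat n (Y1 : Rn n)) φ = actN (vecMat n (Y2 : Rn n)) φ → Y1 = Y2 :=
    fun Y1 Y2 h => Subtype.ext (act_vec_inj _ _ φ hnorm h)
  have hcan : ∀ Y1 Y2 : V,
      I • actN (vecMat n (Y1 : Rn n)) φ = I • actN (vecMat n (Y2 : Rn n)) φ → Y1 = Y2 :=
    fun Y1 Y2 h => hinj Y1 Y2 (smul_right_injective _ Complex.I_ne_zero h)
  -- properties of any J with the defining property
  have props : ∀ J : V → V,
      (∀ X : V, actN (vecMat n (X : Rn n)) φ = I • actN (vecMat n ((J X : Rn n))) φ) →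
      (∀ (a : ℝ) (X Y : V), J (a • X + Y) = a • J X + J Y) ∧
      (∀ X : V, J (J X) = -X) ∧
      (∀ X Y : V, (inner ℝ ((J X : Rn n)) ((J Y : Rn n)) : ℝ)
          = (inner ℝ (X : Rn n) (Y : Rn n) : ℝ)) := by
    intro J hJ
    have hJ' : ∀ X : V, actN (vecMat n ((J X : Rn n))) φ
        = (-I) • actN (vecMat n (X : Rn n)) φ := by
      intro X
      rw [hJ X, smul_smul]
      simp
    refine ⟨?_, ?_, ?_⟩
    · intro a X Y
      apply hcan
      rw [← hJ (a • X + Y)]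
      have hc : ((a • X + Y : V) : Rn n) = a • (X : Rn n) + (Y : Rn n) := by
        simp
      have hc2 : ((a • J X + J Y : V) : Rn n) = a • ((J X : V) : Rn n) + ((J Y : V) : Rn n) := by
        simp
      rw [hc, hc2, vecMat_add, vecMat_add, vecMat_smul, vecMat_smul, actN_addM, actN_addM,
        actN_smulM, actN_smulM, hJ X, hJ Y, smul_comm ((a:ℂ)) I, smul_add]
    · intro X
      have hgoal : X = -(J (J X)) := by
        apply hinj
        have hc : ((-(J (J X)) : V) : Rn n) = -((J (J X) : V) : Rn n) := by simp
        rw [hc, vecMat_neg, actN_negM, hJ X, hJ (J X), smul_smul, Complex.I_mul_I]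
        simp
      exact (neg_eq_iff_eq_neg.mpr hgoal).symm
    · intro X Y
      have e1 := hJ' X
      have e2 := hJ' Y
      have key : (inner ℂ (actN (vecMat n ((J X : Rn n))) φ)
          (actN (vecMat n ((J Y : Rn n))) φ) : ℂ)
          = inner ℂ (actN (vecMat n (X : Rn n)) φ) (actN (vecMat n (Y : Rn n)) φ) := by
        rw [e1, e2, inner_smul_left, inner_smul_right, ← mul_assoc]
        simp
      have r1 := re_inner_act_vec ((J X : Rn n)) ((J Y : Rn n)) φ hnorm
      have r2 := re_inner_act_vec ((X : Rn n)) ((Y : Rn n)) φ hnorm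
      rw [← r1, ← r2, key]
  refine ⟨⟨J0, hJ0spec, fun J hJ => funext fun X => hcan _ _ ?_⟩,
    fun J hJ => props J hJ, ?_⟩
  · rw [← hJ X, ← hJ0spec X]
  · -- evenness
    obtain ⟨hlin, hsq, _⟩ := props J0 hJ0spec
    have hzero : J0 0 = 0 := by
      have := hlin 1 0 0
      simpa using this
    let L : V →ₗ[ℝ] V :=
      { toFun := J0
        map_add' := fun X Y => by
          have := hlin 1 X Y
          simpa using this
        map_smul' := fun a X => by
          have := hlin a X 0
          simpa [hzero] using this }
    have hd : Module.finrank ℝ V = n - r := hpp.dim_eq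
    have hLL : L ∘ₗ L = (-1 : ℝ) • LinearMap.id := by
      apply LinearMap.ext
      intro X
      have := hsq X
      simp [L, this]
    have hdet : (LinearMap.det L) * (LinearMap.det L) = (-1 : ℝ) ^ (n - r) := by
      rw [← LinearMap.det_comp, hLL, LinearMap.det_smul, LinearMap.det_id, hd]
      ring
    rcases Nat.even_or_odd (n - r) with he | ho
    · exact Nat.even_iff.mp he
    · exfalso
      rw [Odd.neg_one_pow ho] at hdet
      nlinarith [sq_nonneg (LinearMap.det L)]
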